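/- For every odd integer g ≥ 5 and every integer z with 1 ≤ z ≤ (g+1)/2, there exists a (2,z,g)-graph with exactly g² − 1 vertices. -/

import Mathlib

/-- A mixed graph: a set of undirected edges (a symmetric irreflexive relation)
together with a set of directed arcs (an irreflexive relation), with no loops.
Since edges and arcs are given by relations, there are no repeated edges or arcs. -/
structure MixedGraph (V : Type*) where
  Edge : V → V → Prop
  Arc : V → V → Prop
  edge_symm : ∀ {u v}, Edge u v → Edge v u
  edge_irrefl : ∀ v, ¬ Edge v v
  arc_irrefl : ∀ v, ¬ Arc v v

/-- A cycle of length `len ≥ 1` in a mixed graph: a cyclic sequence of vertices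
`vert : ZMod len → V` where each consecutive pair `(vert i, vert (i+1))` is joined
either by an arc from `vert i` to `vert (i+1)` (when `useArc i = true`) or by an
undirected edge (when `useArc i = false`), and no edge or arc is used more than once. -/
structure MixedCycle {V : Type*} (G : MixedGraph V) where
  len : ℕ
  len_pos : 0 < len
  vert : ZMod len → V
  useArc : ZMod len → Bool
  step_arc : ∀ i, useArc i = true → G.Arc (vert i) (vert (i + 1))
  step_edge : ∀ i, useArc i = false → G.Edge (vert i) (vert (i + 1))
  arc_once : ∀ i j, useArc i = true → useArc j = true →
    vert i = vert j → vert (i + 1) = vert (j + 1) → i = j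
  edge_once : ∀ i j, useArc i = false → useArc j = false →
    ((vert i = vert j ∧ vert (i + 1) = vert (j + 1)) ∨
      (vert i = vert (j + 1) ∧ vert (i + 1) = vert j)) → i = j

/-- A mixed graph has girth `g` if it has a cycle of length `g` and no shorter cycle. -/
def MixedGraph.HasGirth {V : Type*} (G : MixedGraph V) (g : ℕ) : Prop :=
  (∃ c : MixedCycle G, c.len = g) ∧ ∀ c : MixedCycle G, g ≤ c.len

/-- An `(r,z,g)`-graph: every vertex is incident with exactly `r` undirected edges,
every vertex has out-degree exactly `z`, and the girth is `g`. -/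
def IsMixedRZG {V : Type*} (G : MixedGraph V) (r z g : ℕ) : Prop :=
  (∀ v, Nat.card {u | G.Edge v u} = r) ∧
  (∀ v, Nat.card {u | G.Arc v u} = z) ∧
  G.HasGirth g

/-! ### Auxiliary lemmas about `ZMod` -/

private lemma zmod_all_eq {n : ℕ} [NeZero n] {α : Sort*} (f : ZMod n → α)
    (h : ∀ i, f (i + 1) = f i) (i : ZMod n) : f i = f 0 := by
  have hm : ∀ m : ℕ, f (m : ZMod n) = f 0 := by
    intro m
    induction m with
    | zero => simp
    | succ m ih =>
      have : ((m + 1 : ℕ) : ZMod n) = (m : ZMod n) + 1 := by push_cast; ring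
      rw [this, h]; exact ih
  have hi : ((i.val : ℕ) : ZMod n) = i := ZMod.natCast_rightInverse i
  rw [← hi]; exact hm i.val

private lemma zmod_telescope {n : ℕ} [NeZero n] {M : Type*} [AddCommGroup M]
    (F : ZMod n → M) : ∑ i : ZMod n, (F (i + 1) - F i) = 0 := by
  rw [Finset.sum_sub_distrib,
    Fintype.sum_equiv (Equiv.addRight (1 : ZMod n)) (fun i => F (i + 1)) F (fun i => rfl)]
  exact sub_self _

/-! ### The construction

Vertices: `ZMod q × ZMod p` with `q = g + 1`, `p = g - 1`.
Edges: `±1` in the first coordinate, within a layer (second coordinate fixed).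
Arcs: from `(x, j)` to `(x + 2t + [j = 0], j + 1)` for `t < z`. -/

def LG (q p z : ℕ) (hq : 6 ≤ q) (hp : 4 ≤ p) : MixedGraph (ZMod q × ZMod p) where
  Edge u v := v.2 = u.2 ∧ (v.1 = u.1 + 1 ∨ v.1 + 1 = u.1)
  Arc u v := v.2 = u.2 + 1 ∧
    ∃ t : ℕ, t < z ∧ v.1 = u.1 + ((2 * t : ℕ) : ZMod q) + (if u.2 = 0 then 1 else 0)
  edge_symm := by
    rintro u v ⟨h2, h1 | h1⟩
    · exact ⟨h2.symm, Or.inr h1.symm⟩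
    · exact ⟨h2.symm, Or.inl h1.symm⟩
  edge_irrefl := by
    rintro v ⟨-, h | h⟩
    · have h1 : (1 : ZMod q) = 0 := left_eq_add.mp h
      have h2 : ((1 : ℕ) : ZMod q) = 0 := by exact_mod_cast h1
      have := Nat.le_of_dvd one_pos ((ZMod.natCast_eq_zero_iff 1 q).mp h2)
      omega
    · have h1 : (1 : ZMod q) = 0 := add_eq_left.mp h
      have h2 : ((1 : ℕ) : ZMod q) = 0 := by exact_mod_cast h1
      have := Nat.le_of_dvd one_pos ((ZMod.natCast_eq_zero_iff 1 q).mp h2)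
      omega
  arc_irrefl := by
    rintro v ⟨h2, -⟩
    have h1 : (1 : ZMod p) = 0 := left_eq_add.mp h2
    have h2 : ((1 : ℕ) : ZMod p) = 0 := by exact_mod_cast h1
    have := Nat.le_of_dvd one_pos ((ZMod.natCast_eq_zero_iff 1 p).mp h2)
    omega

/-! ### Degree computations -/

lemma LG_edge_card (q p z : ℕ) (hq : 6 ≤ q) (hp : 4 ≤ p) (v : ZMod q × ZMod p) :
    Nat.card {u | (LG q p z hq hp).Edge v u} = 2 := by
  have hset : {u | (LG q p z hq hp).Edge v u} =
      ({(v.1 + 1, v.2), (v.1 - 1, v.2)} : Set (ZMod q × ZMod p)) := by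
    ext ⟨y, j⟩
    simp only [LG, Set.mem_setOf_eq, Set.mem_insert_iff, Set.mem_singleton_iff,
      Prod.mk.injEq]
    constructor
    · rintro ⟨h2, h1 | h1⟩
      · exact Or.inl ⟨h1, h2⟩
      · exact Or.inr ⟨by rw [← h1]; ring, h2⟩
    · rintro (⟨h1, h2⟩ | ⟨h1, h2⟩)
      · exact ⟨h2, Or.inl h1⟩
      · exact ⟨h2, Or.inr (by rw [h1]; ring)⟩
  rw [Nat.card_coe_set_eq, hset]
  apply Set.ncard_pair
  intro h
  have h1 : v.1 + 1 = v.1 - 1 := congrArg Prod.fst h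
  have h2 : ((2 : ℕ) : ZMod q) = 0 := by
    push_cast
    linear_combination h1
  have := Nat.le_of_dvd two_pos ((ZMod.natCast_eq_zero_iff 2 q).mp h2)
  omega

lemma LG_arc_card (q p z : ℕ) (hq : 6 ≤ q) (hp : 4 ≤ p) (hzq : 2 * z ≤ q)
    (v : ZMod q × ZMod p) :
    Nat.card {u | (LG q p z hq hp).Arc v u} = z := by
  classical
  set F : ℕ → ZMod q × ZMod p :=
    fun t => (v.1 + ((2 * t : ℕ) : ZMod q) + (if v.2 = 0 then 1 else 0), v.2 + 1) with hF
  have hset : {u | (LG q p z hq hp).Arc v u} = ↑((Finset.range z).image F) := by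
    ext u
    simp only [LG, Set.mem_setOf_eq, Finset.coe_image, Set.mem_image, Finset.mem_coe,
      Finset.mem_range, hF]
    constructor
    · rintro ⟨h2, t, ht, h1⟩
      exact ⟨t, ht, by rw [← h1, ← h2]⟩
    · rintro ⟨t, ht, h⟩
      rw [← h]
      exact ⟨rfl, t, ht, rfl⟩
  rw [Nat.card_coe_set_eq, hset, Set.ncard_coe_finset,
    Finset.card_image_of_injOn, Finset.card_range]
  intro t ht t' ht' he
  simp only [Finset.coe_range, Set.mem_Iio] at ht ht'
  have h1 : ((2 * t : ℕ) : ZMod q) = ((2 * t' : ℕ) : ZMod q) := by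
    have := congrArg Prod.fst he
    simpa [hF] using this
  have h2 : (2 * t) = (2 * t') := by
    have e1 : ((2 * t : ℕ) : ZMod q).val = 2 * t := ZMod.val_cast_of_lt (by omega)
    have e2 : ((2 * t' : ℕ) : ZMod q).val = 2 * t' := ZMod.val_cast_of_lt (by omega)
    rw [← e1, ← e2, h1]
  omega

/-! ### Girth lower bound -/

lemma LG_girth_lb (q p z : ℕ) (hq : 6 ≤ q) (hp : 4 ≤ p) (hpq : p + 2 = q) (h2q : 2 ∣ q)
    (c : MixedCycle (LG q p z hq hp)) : p + 1 ≤ c.len := by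
  by_contra hcon
  push_neg at hcon
  haveI : NeZero c.len := ⟨c.len_pos.ne'⟩
  haveI : NeZero p := ⟨by omega⟩
  haveI : NeZero q := ⟨by omega⟩
  set L := c.len with hLdef
  have hL1 : 1 ≤ L := c.len_pos
  have hLp : L ≤ p := by omega
  set X : ZMod L → ZMod q := fun i => (c.vert i).1 with hX
  set lvl : ZMod L → ZMod p := fun i => (c.vert i).2 with hlvl
  -- layer increments
  have hstep : ∀ i, lvl (i + 1) - lvl i = (if c.useArc i then 1 else 0) := by
    intro i
    by_cases h : c.useArc i
    · have h2 := (c.step_arc i h).1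
      simp only [if_pos h]
      show (c.vert (i + 1)).2 - (c.vert i).2 = 1
      rw [h2]; ring
    · have h2 := (c.step_edge i (by simp [h])).1
      simp only [if_neg h]
      show (c.vert (i + 1)).2 - (c.vert i).2 = 0
      rw [h2]; ring
  have htel : ∑ i : ZMod L, (lvl (i + 1) - lvl i) = 0 := zmod_telescope lvl
  have hsum1 : ∑ i : ZMod L, (if c.useArc i then (1 : ZMod p) else 0) = 0 := by
    conv_rhs => rw [← htel]
    exact Finset.sum_congr rfl fun i _ => (hstep i).symm
  have hkcard : ((Finset.univ.filter (fun i => c.useArc i = true)).card : ZMod p) = 0 := by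
    rw [← Finset.sum_boole]
    exact hsum1
  set k := (Finset.univ.filter (fun i => c.useArc i = true)).card with hk
  have hpk : p ∣ k := (ZMod.natCast_eq_zero_iff k p).mp hkcard
  have hkL : k ≤ L := by
    have := Finset.card_filter_le (Finset.univ : Finset (ZMod L)) (fun i => c.useArc i = true)
    simpa [ZMod.card] using this
  rcases Nat.eq_zero_or_pos k with hk0 | hkpos
  · -- all steps are edges
    have hall : ∀ i, c.useArc i = false := by
      intro i
      by_contra h
      have hmem : i ∈ Finset.univ.filter (fun i => c.useArc i = true) := by
        simp only [Finset.mem_filter, Finset.mem_univ, true_and]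
        revert h
        cases c.useArc i <;> simp
      have := Finset.card_pos.mpr ⟨i, hmem⟩
      omega
    have hE : ∀ i, lvl (i + 1) = lvl i ∧ (X (i + 1) = X i + 1 ∨ X (i + 1) + 1 = X i) :=
      fun i => c.step_edge i (hall i)
    set D : ZMod L → ZMod q := fun i => X (i + 1) - X i with hD
    have hDval : ∀ i, D i = 1 ∨ D i = -1 := by
      intro i
      rcases (hE i).2 with h | h
      · left; show X (i + 1) - X i = 1; rw [h]; ring
      · right; show X (i + 1) - X i = -1; rw [← h]; ring
    have hXs : ∀ j, X (j + 1) = X j + D j := by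
      intro j; show X (j + 1) = X j + (X (j + 1) - X j); ring
    have hq2 : ((2 : ℕ) : ZMod q) ≠ 0 := by
      intro h
      have := Nat.le_of_dvd two_pos ((ZMod.natCast_eq_zero_iff 2 q).mp h)
      omega
    have hone : (1 : ZMod q) ≠ -1 := by
      intro h
      apply hq2
      push_cast
      linear_combination h
    by_cases hc : ∀ i, D (i + 1) = D i
    · have hconst := zmod_all_eq D hc
      have hsum : ∑ i : ZMod L, D i = 0 := zmod_telescope X
      rw [Finset.sum_congr rfl (fun i _ => hconst i), Finset.sum_const] at hsum
      have hcard : (Finset.univ : Finset (ZMod L)).card = L := by simp [ZMod.card]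
      rw [hcard] at hsum
      have hLq : ((L : ℕ) : ZMod q) = 0 := by
        rcases hDval 0 with h | h
        · rw [h] at hsum
          simpa using hsum
        · rw [h] at hsum
          simp only [nsmul_eq_mul, mul_neg, mul_one, neg_eq_zero] at hsum
          exact hsum
      have := (ZMod.natCast_eq_zero_iff L q).mp hLq
      have := Nat.le_of_dvd c.len_pos this
      omega
    · push_neg at hc
      obtain ⟨i, hi⟩ := hc
      have hDD : D (i + 1) = -D i := by
        rcases hDval i with h1 | h1 <;> rcases hDval (i + 1) with h2 | h2
        · exact absurd (h2.trans h1.symm) hi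
        · rw [h1, h2]
        · rw [h1, h2]; ring
        · exact absurd (h2.trans (by rw [h1])) hi
      have hvv : c.vert (i + 1 + 1) = c.vert i := by
        have h1 : X (i + 1 + 1) = X i := by
          rw [hXs (i + 1), hXs i, hDD]; ring
        have h2 : lvl (i + 1 + 1) = lvl i := by
          rw [(hE (i + 1)).1, (hE i).1]
        exact Prod.ext h1 h2
      have heq := c.edge_once i (i + 1) (hall i) (hall (i + 1)) (Or.inr ⟨hvv.symm, rfl⟩)
      have h1 : (1 : ZMod L) = 0 := left_eq_add.mp heq
      have h2 : ((1 : ℕ) : ZMod L) = 0 := by exact_mod_cast h1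
      have hdvd := (ZMod.natCast_eq_zero_iff 1 L).mp h2
      have hL1' : L = 1 := by
        have := Nat.le_of_dvd (by norm_num) hdvd
        omega
      apply hi
      have : (i : ZMod L) + 1 = i := by
        rw [h1, add_zero]
      rw [this]
  · -- k ≥ 1, hence k = p = L and all steps are arcs
    have hkp : k = p := by
      have := Nat.le_of_dvd hkpos hpk
      omega
    have hLp' : L = p := by omega
    have huniv : Finset.univ.filter (fun i => c.useArc i = true) = Finset.univ := by
      apply Finset.eq_univ_of_card
      rw [ZMod.card]
      omega
    have hall : ∀ i, c.useArc i = true := by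
      intro i
      have : i ∈ Finset.univ.filter (fun i => c.useArc i = true) := by
        rw [huniv]; exact Finset.mem_univ i
      exact (Finset.mem_filter.mp this).2
    have hA : ∀ i, (lvl (i + 1) = lvl i + 1) ∧
        ∃ t : ℕ, t < z ∧ X (i + 1) = X i + ((2 * t : ℕ) : ZMod q) +
          (if lvl i = 0 then 1 else 0) := fun i => c.step_arc i (hall i)
    -- the layer of vertex `m` is `lvl 0 + m`
    have hgrow : ∀ m : ℕ, lvl ((m : ZMod L)) = lvl 0 + (m : ZMod p) := by
      intro m
      induction m with
      | zero => simp
      | succ m ih =>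
        have e1 : ((m + 1 : ℕ) : ZMod L) = (m : ZMod L) + 1 := by push_cast; ring
        have e2 : ((m + 1 : ℕ) : ZMod p) = (m : ZMod p) + 1 := by push_cast; ring
        rw [e1, (hA _).1, ih, e2]
        ring
    set i₀ : ZMod L := (((-(lvl 0)).val : ℕ) : ZMod L) with hi₀
    have hrep : ∀ j : ZMod L, lvl j = lvl 0 + ((j.val : ℕ) : ZMod p) := by
      intro j
      conv_lhs => rw [← ZMod.natCast_rightInverse j]
      exact hgrow j.val
    have hvp : ∀ m : ℕ, m < p → ((m : ZMod p)) = ((m : ZMod p)) := fun _ _ => rfl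
    have hval_i₀ : i₀.val = (-(lvl 0)).val := by
      rw [hi₀]
      exact ZMod.val_cast_of_lt (by have := (-(lvl 0)).val_lt; omega)
    have hiff : ∀ i : ZMod L, lvl i = 0 ↔ i = i₀ := by
      intro i
      rw [hrep i]
      constructor
      · intro h
        have h1 : ((i.val : ℕ) : ZMod p) = -(lvl 0) := by linear_combination h
        have h2 : ((i.val : ℕ) : ZMod p).val = (-(lvl 0)).val := by rw [h1]
        have h3 : ((i.val : ℕ) : ZMod p).val = i.val := ZMod.val_cast_of_lt (by
          have := i.val_lt
          omega)
        apply ZMod.val_injective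
        rw [hval_i₀, ← h2, h3]
      · intro h
        rw [h, hval_i₀]
        have h4 : (((-(lvl 0)).val : ℕ) : ZMod p) = -(lvl 0) := by
          rw [ZMod.natCast_val, ZMod.cast_id]
        rw [h4]
        ring
    -- sum of displacements in `ZMod q`, reduced mod 2
    have hsum0 : ∑ i : ZMod L, (X (i + 1) - X i) = 0 := zmod_telescope X
    set φ : ZMod q →+* ZMod 2 := ZMod.castHom h2q (ZMod 2) with hφ
    have hφ0 := congrArg φ hsum0
    rw [map_sum, map_zero] at hφ0
    have hterm : ∀ i : ZMod L, φ (X (i + 1) - X i) = (if i = i₀ then 1 else 0) := by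
      intro i
      obtain ⟨t, ht, hx⟩ := (hA i).2
      have hd : X (i + 1) - X i = ((2 * t : ℕ) : ZMod q) + (if lvl i = 0 then 1 else 0) := by
        rw [hx]; ring
      rw [hd, map_add, map_natCast, apply_ite φ, map_one, map_zero]
      have h2t : ((2 * t : ℕ) : ZMod 2) = 0 := by
        rw [ZMod.natCast_eq_zero_iff]
        exact Dvd.intro t rfl
      rw [h2t, zero_add]
      simp only [hiff i]
    rw [Finset.sum_congr rfl (fun i _ => hterm i)] at hφ0
    rw [Finset.sum_ite_eq' Finset.univ i₀ (fun _ => (1 : ZMod 2))] at hφ0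
    simp only [Finset.mem_univ, if_pos] at hφ0
    exact absurd hφ0 (by decide)

/-! ### The girth-`p+1` cycle -/

def LG_cycle (q p z : ℕ) (hq : 6 ≤ q) (hp : 4 ≤ p) (hz : 1 ≤ z) :
    MixedCycle (LG q p z hq hp) where
  len := p + 1
  len_pos := Nat.succ_pos p
  vert i := if i.val = 0 then ((0 : ZMod q), (0 : ZMod p)) else ((1 : ZMod q), (i.val : ZMod p))
  useArc i := decide (i.val ≠ p)
  step_arc := by
    intro i h
    haveI : Fact (1 < p + 1) := ⟨by omega⟩
    have hne : i.val ≠ p := of_decide_eq_true h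
    have hlt : i.val < p := by
      have := i.val_lt
      omega
    have hval : (i + 1).val = i.val + 1 := by
      rw [ZMod.val_add, ZMod.val_one]
      exact Nat.mod_eq_of_lt (by omega)
    have hne1 : (i + 1).val ≠ 0 := by omega
    rw [if_neg hne1, hval]
    by_cases h0 : i.val = 0
    · rw [if_pos h0, h0]
      refine ⟨by push_cast; ring, 0, hz, ?_⟩
      rw [if_pos rfl]
      simp
    · rw [if_neg h0]
      have hcast : ((i.val : ℕ) : ZMod p) ≠ 0 := by
        intro hcc
        have hd := (ZMod.natCast_eq_zero_iff i.val p).mp hcc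
        have := Nat.le_of_dvd (by omega) hd
        omega
      refine ⟨by push_cast; ring, 0, hz, ?_⟩
      rw [if_neg hcast]
      simp
  step_edge := by
    intro i h
    haveI : Fact (1 < p + 1) := ⟨by omega⟩
    have hvp : i.val = p := by
      have := of_decide_eq_false h
      omega
    have hval : (i + 1).val = 0 := by
      rw [ZMod.val_add, ZMod.val_one, hvp]
      simp
    have hp0 : i.val ≠ 0 := by omega
    rw [if_neg hp0, if_pos hval, hvp]
    exact ⟨(ZMod.natCast_self p).symm, Or.inr (zero_add 1)⟩
  arc_once := by
    intro i j hi hj hv _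
    haveI : Fact (1 < q) := ⟨by omega⟩
    have hnei : i.val ≠ p := of_decide_eq_true hi
    have hnej : j.val ≠ p := of_decide_eq_true hj
    have hlti : i.val < p := by have := i.val_lt; omega
    have hltj : j.val < p := by have := j.val_lt; omega
    by_cases h0i : i.val = 0 <;> by_cases h0j : j.val = 0
    · exact ZMod.val_injective _ (h0i.trans h0j.symm)
    · rw [if_pos h0i, if_neg h0j] at hv
      have := congrArg Prod.fst hv
      simp only at this
      exact absurd this.symm one_ne_zero
    · rw [if_neg h0i, if_pos h0j] at hv
      have := congrArg Prod.fst hv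
      simp only at this
      exact absurd this one_ne_zero
    · rw [if_neg h0i, if_neg h0j] at hv
      have h2 : ((i.val : ℕ) : ZMod p) = ((j.val : ℕ) : ZMod p) := congrArg Prod.snd hv
      have e1 : ((i.val : ℕ) : ZMod p).val = i.val := ZMod.val_cast_of_lt hlti
      have e2 : ((j.val : ℕ) : ZMod p).val = j.val := ZMod.val_cast_of_lt hltj
      apply ZMod.val_injective
      rw [← e1, ← e2, h2]
  edge_once := by
    intro i j hi hj _
    have hvi : i.val = p := by
      have := of_decide_eq_false hi
      omega
    have hvj : j.val = p := by
      have := of_decide_eq_false hj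
      omega
    exact ZMod.val_injective _ (hvi.trans hvj.symm)

/-- For every odd `g ≥ 5` and `1 ≤ z ≤ (g+1)/2`, there is a `(2,z,g)`-graph with
`g^2 - 1` vertices. -/
theorem f_2_z_g_odd (g z : ℕ) (hg : 5 ≤ g) (hgo : Odd g) (hz1 : 1 ≤ z)
    (hzg : z ≤ (g + 1) / 2) :
    (∃ (V : Type) (_ : Fintype V) (G : MixedGraph V),
      Nat.card V = g ^ 2 - 1 ∧ IsMixedRZG G 2 z g) := by
  obtain ⟨w, hw⟩ := hgo
  set q := g + 1 with hqdef
  set p := g - 1 with hpdef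
  have hq : 6 ≤ q := by omega
  have hp : 4 ≤ p := by omega
  have hpq : p + 2 = q := by omega
  have h2q : 2 ∣ q := ⟨w + 1, by omega⟩
  have hzq : 2 * z ≤ q := by omega
  haveI : NeZero q := ⟨by omega⟩
  haveI : NeZero p := ⟨by omega⟩
  refine ⟨ZMod q × ZMod p, inferInstance, LG q p z hq hp, ?_, ?_, ?_, ?_⟩
  · rw [Nat.card_prod, Nat.card_zmod, Nat.card_zmod]
    have h1 : 1 ≤ g := by omega
    have h2 : 1 ≤ g ^ 2 := by nlinarith
    rw [hqdef, hpdef]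
    zify [h1, h2]
    ring
  · exact fun v => LG_edge_card q p z hq hp v
  · exact fun v => LG_arc_card q p z hq hp hzq v
  · have hgp : g = p + 1 := by omega
    rw [hgp]
    exact ⟨⟨LG_cycle q p z hq hp hz1, rfl⟩, fun c => LG_girth_lb q p z hq hp hpq h2q c⟩
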